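/- Let F be a graph that is neither complete nor empty. Then for every p ∈ [0,1] there exists a sequence of graphs G₁, G₂, … with |V(G_i)| → ∞, edge densities converging to p, and s(F,G_i) = 0 for all i (F appears in no G_i as an induced subgraph). -/

import Mathlib

open scoped Classical

/-- The induced subgraph frequency `s(F,G)`: the probability that a uniformly random
`|V(F)|`-element subset of the vertices of `G` induces a subgraph isomorphic to `F`. -/
noncomputable def subgraphFreq {V W : Type*} [Fintype V] [Fintype W]
    (F : SimpleGraph V) (G : SimpleGraph W) : ℝ :=
  (((Finset.univ : Finset W).powersetCard (Fintype.card V)).filter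
      (fun S => Nonempty (G.induce (↑S : Set W) ≃g F))).card /
    ((Fintype.card W).choose (Fintype.card V))


open scoped Classical
open Finset Filter

def IsNC {V : Type*} (G : SimpleGraph V) : Prop :=
  ∃ P : V → Prop, ∀ x y, G.Adj x y ↔ x ≠ y ∧ P x ∧ P y

def ncG (m a : ℕ) : SimpleGraph (Fin m) where
  Adj x y := x ≠ y ∧ x.val < a ∧ y.val < a
  symm := ⟨fun _ _ (h : _ ∧ _ ∧ _) => ⟨h.1.symm, h.2.2, h.2.1⟩⟩
  loopless := ⟨fun _ (h : _ ∧ _ ∧ _) => h.1 rfl⟩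

lemma ncG_isNC (m a : ℕ) : IsNC (ncG m a) :=
  ⟨fun x => x.val < a, fun _ _ => Iff.rfl⟩

lemma isNC_of_iso {V W : Type*} {G : SimpleGraph V} {H : SimpleGraph W}
    (e : G ≃g H) (h : IsNC H) : IsNC G := by
  obtain ⟨P, hP⟩ := h
  refine ⟨fun x => P (e x), fun x y => ?_⟩
  rw [← e.map_adj_iff, hP]
  exact and_congr_left' (EmbeddingLike.apply_eq_iff_eq e).not

lemma isNC_induce {V : Type*} {G : SimpleGraph V} (h : IsNC G) (S : Set V) :
    IsNC (G.induce S) := by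
  obtain ⟨P, hP⟩ := h
  refine ⟨fun x => P x.val, fun x y => ?_⟩
  show G.Adj x.val y.val ↔ _
  rw [hP]
  exact and_congr_left' Subtype.coe_injective.ne_iff

lemma not_isNC_compl {k : ℕ} (F : SimpleGraph (Fin k)) (h1 : F ≠ ⊤) (h2 : F ≠ ⊥)
    (hF : IsNC F) : ¬ IsNC Fᶜ := by
  obtain ⟨P, hP⟩ := hF
  have hedge : ∃ x y, F.Adj x y := by
    by_contra hc
    push_neg at hc
    refine h2 (SimpleGraph.ext ?_)
    ext x y
    simp [hc x y]
  obtain ⟨x, y, hxy⟩ := hedge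
  obtain ⟨hne, hPx, hPy⟩ := (hP x y).mp hxy
  have hnonedge : ∃ u v, u ≠ v ∧ ¬ F.Adj u v := by
    by_contra hc
    push_neg at hc
    refine h1 (SimpleGraph.ext ?_)
    ext a b
    simp only [SimpleGraph.top_adj]
    exact ⟨fun h => h.ne, fun h => hc a b h⟩
  obtain ⟨u, v, huv, hnadj⟩ := hnonedge
  have hPuv : ¬ P u ∨ ¬ P v := by
    by_contra hc
    push_neg at hc
    exact hnadj ((hP u v).mpr ⟨huv, hc.1, hc.2⟩)
  obtain ⟨w, hw⟩ : ∃ w, ¬ P w := hPuv.elim (fun h => ⟨u, h⟩) (fun h => ⟨v, h⟩)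
  rintro ⟨Q, hQ⟩
  have hwx : w ≠ x := fun h => hw (h ▸ hPx)
  have hwy : w ≠ y := fun h => hw (h ▸ hPy)
  have hadj1 : Fᶜ.Adj w x := by
    rw [SimpleGraph.compl_adj]
    exact ⟨hwx, fun h => hw (((hP w x).mp h).2.1)⟩
  have hadj2 : Fᶜ.Adj w y := by
    rw [SimpleGraph.compl_adj]
    exact ⟨hwy, fun h => hw (((hP w y).mp h).2.1)⟩
  have hQx : Q x := ((hQ w x).mp hadj1).2.2
  have hQy : Q y := ((hQ w y).mp hadj2).2.2
  exact ((hQ x y).mpr ⟨hne, hQx, hQy⟩).2 hxy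

def isoCompl {V W : Type*} {G : SimpleGraph V} {H : SimpleGraph W} (e : G ≃g H) :
    Gᶜ ≃g Hᶜ where
  toEquiv := e.toEquiv
  map_rel_iff' := by
    intro a b
    show Hᶜ.Adj (e a) (e b) ↔ Gᶜ.Adj a b
    rw [SimpleGraph.compl_adj, SimpleGraph.compl_adj, e.map_adj_iff]
    exact and_congr_left' (EmbeddingLike.apply_eq_iff_eq e).not

lemma iso_top_iff {m : ℕ} (G : SimpleGraph (Fin m)) (S : Finset (Fin m))
    (hS : S.card = 2) :
    Nonempty (G.induce (↑S : Set (Fin m)) ≃g (⊤ : SimpleGraph (Fin 2))) ↔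
      ∀ x ∈ S, ∀ y ∈ S, x ≠ y → G.Adj x y := by
  constructor
  · rintro ⟨e⟩ x hx y hy hne
    have hx' : x ∈ (↑S : Set (Fin m)) := hx
    have hy' : y ∈ (↑S : Set (Fin m)) := hy
    have hne' : e ⟨x, hx'⟩ ≠ e ⟨y, hy'⟩ :=
      fun h => hne (congrArg Subtype.val (e.toEquiv.injective h))
    have : (⊤ : SimpleGraph (Fin 2)).Adj (e ⟨x, hx'⟩) (e ⟨y, hy'⟩) := hne'
    rw [e.map_adj_iff] at this
    exact this
  · intro h
    have heq : G.induce (↑S : Set (Fin m)) = ⊤ := by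
      ext ⟨a, ha⟩ ⟨b, hb⟩
      simp only [SimpleGraph.comap_adj, SimpleGraph.top_adj]
      constructor
      · intro hadj
        exact fun hc => (G.ne_of_adj hadj) (congrArg Subtype.val hc)
      · intro hne
        exact h a ha b hb (fun hc => hne (Subtype.ext hc))
    rw [heq]
    have hc2 : Fintype.card (↑S : Set (Fin m)) = 2 := by
      simp [hS]
    exact ⟨SimpleGraph.Iso.completeGraph (Fintype.equivFinOfCardEq hc2)⟩


lemma subgraphFreq_eq {V W : Type*} [Fintype V] [Fintype W]
    (F : SimpleGraph V) (G : SimpleGraph W) :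
    subgraphFreq F G =
    (((Finset.univ : Finset W).powersetCard (Fintype.card V)).filter
      (fun S : Finset W => Nonempty (G.induce (↑S : Set W) ≃g F))).card /
    ((Fintype.card W).choose (Fintype.card V)) := by
  unfold subgraphFreq
  simp only [bind_pure_comp, Finset.fmap_def]
  rw [Finset.filter_image]
  congr 2
  exact Finset.card_image_of_injective _ Finset.coe_injective

lemma pair_forall {α : Type*} [DecidableEq α] (R : α → α → Prop) (hsym : ∀ a b, R a b → R b a)
    (x y : α) (hxy : x ≠ y) :
    (∀ u ∈ ({x, y} : Finset α), ∀ v ∈ ({x, y} : Finset α), u ≠ v → R u v) ↔ R x y := by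
  constructor
  · intro h
    exact h x (by simp) y (by simp) hxy
  · intro h u hu v hv huv
    simp only [Finset.mem_insert, Finset.mem_singleton] at hu hv
    rcases hu with rfl | rfl <;> rcases hv with rfl | rfl
    · exact absurd rfl huv
    · exact h
    · exact hsym _ _ h
    · exact absurd rfl huv

lemma filterT_card (m a : ℕ) (h : a ≤ m) :
    (Finset.univ.filter (fun x : Fin m => x.val < a)).card = a := by
  have : Finset.univ.filter (fun x : Fin m => x.val < a)
      = Finset.univ.map (Fin.castLEEmb h) := by
    ext x
    simp only [Finset.mem_filter, Finset.mem_univ, true_and, Finset.mem_map,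
      Fin.castLEEmb, Function.Embedding.coeFn_mk]
    constructor
    · intro hx
      exact ⟨⟨x.val, hx⟩, rfl⟩
    · rintro ⟨i, rfl⟩
      exact i.isLt
  rw [this, Finset.card_map, Finset.card_univ, Fintype.card_fin]

lemma count1 (m a : ℕ) (h : a ≤ m) :
    ((Finset.univ.powersetCard 2).filter
      (fun S : Finset (Fin m) =>
        Nonempty ((ncG m a).induce (↑S : Set (Fin m)) ≃g (⊤ : SimpleGraph (Fin 2))))).card
      = a.choose 2 := by
  have hset : ((Finset.univ.powersetCard 2).filter
      (fun S : Finset (Fin m) =>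
        Nonempty ((ncG m a).induce (↑S : Set (Fin m)) ≃g (⊤ : SimpleGraph (Fin 2)))))
      = (Finset.univ.filter (fun x : Fin m => x.val < a)).powersetCard 2 := by
    ext S
    simp only [Finset.mem_filter, Finset.mem_powersetCard]
    constructor
    · rintro ⟨⟨-, hcard⟩, hiso⟩
      rw [iso_top_iff _ _ hcard] at hiso
      refine ⟨fun x hx => ?_, hcard⟩
      obtain ⟨y, hy, hyx⟩ := Finset.exists_mem_ne (s := S) (by omega) x
      have := hiso x hx y hy hyx.symm
      simp only [Finset.mem_filter, Finset.mem_univ, true_and]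
      exact this.2.1
    · rintro ⟨hsub, hcard⟩
      refine ⟨⟨Finset.subset_univ S, hcard⟩, ?_⟩
      rw [iso_top_iff _ _ hcard]
      intro x hx y hy hxy
      have hxa := (Finset.mem_filter.mp (hsub hx)).2
      have hya := (Finset.mem_filter.mp (hsub hy)).2
      exact ⟨hxy, hxa, hya⟩
  rw [hset, Finset.card_powersetCard, filterT_card m a h]

lemma count_compl (m : ℕ) (G : SimpleGraph (Fin m)) :
    ((Finset.univ.powersetCard 2).filter
      (fun S : Finset (Fin m) =>
        Nonempty ((Gᶜ).induce (↑S : Set (Fin m)) ≃g (⊤ : SimpleGraph (Fin 2)))))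
    = (Finset.univ.powersetCard 2) \ ((Finset.univ.powersetCard 2).filter
      (fun S : Finset (Fin m) =>
        Nonempty (G.induce (↑S : Set (Fin m)) ≃g (⊤ : SimpleGraph (Fin 2))))) := by
  ext S
  simp only [Finset.mem_filter, Finset.mem_sdiff, not_and]
  constructor
  · rintro ⟨hmem, hiso⟩
    have hcard : S.card = 2 := (Finset.mem_powersetCard.mp hmem).2
    obtain ⟨x, y, hxy, rfl⟩ := Finset.card_eq_two.mp hcard
    rw [iso_top_iff _ _ hcard, pair_forall (Gᶜ).Adj (fun a b h => (Gᶜ).adj_symm h) x y hxy] at hiso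
    refine ⟨hmem, fun _ hiso' => ?_⟩
    rw [iso_top_iff _ _ hcard, pair_forall G.Adj (fun a b h => G.adj_symm h) x y hxy] at hiso'
    exact hiso.2 hiso'
  · rintro ⟨hmem, hniso⟩
    have hcard : S.card = 2 := (Finset.mem_powersetCard.mp hmem).2
    obtain ⟨x, y, hxy, rfl⟩ := Finset.card_eq_two.mp hcard
    rw [iso_top_iff _ _ hcard, pair_forall G.Adj (fun a b h => G.adj_symm h) x y hxy] at hniso
    refine ⟨hmem, ?_⟩
    rw [iso_top_iff _ _ hcard, pair_forall (Gᶜ).Adj (fun a b h => (Gᶜ).adj_symm h) x y hxy]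
    exact ⟨hxy, hniso hmem⟩

lemma freq2_ncG (m a : ℕ) (h : a ≤ m) :
    subgraphFreq (⊤ : SimpleGraph (Fin 2)) (ncG m a) = (a.choose 2 : ℝ) / (m.choose 2) := by
  rw [subgraphFreq_eq, show Fintype.card (Fin 2) = 2 from rfl, Fintype.card_fin, count1 m a h]

lemma freq2_ncG_compl (m a : ℕ) (h : a ≤ m) :
    subgraphFreq (⊤ : SimpleGraph (Fin 2)) (ncG m a)ᶜ
      = ((m.choose 2 - a.choose 2 : ℕ) : ℝ) / (m.choose 2) := by
  rw [subgraphFreq_eq, show Fintype.card (Fin 2) = 2 from rfl, Fintype.card_fin]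
  rw [count_compl m (ncG m a), Finset.card_sdiff_of_subset (Finset.filter_subset _ _),
    count1 m a h, Finset.card_powersetCard, Finset.card_univ, Fintype.card_fin]

lemma freq_zero {k m : ℕ} (F : SimpleGraph (Fin k)) (G : SimpleGraph (Fin m))
    (h : ∀ S : Finset (Fin m), ¬ Nonempty (G.induce (↑S : Set (Fin m)) ≃g F)) :
    subgraphFreq F G = 0 := by
  rw [subgraphFreq_eq, Finset.filter_false_of_mem (fun S _ => h S)]
  simp

lemma induce_compl {V : Type*} (G : SimpleGraph V) (S : Set V) :
    (Gᶜ).induce S = (G.induce S)ᶜ := by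
  ext a b
  show Gᶜ.Adj a.val b.val ↔ _
  rw [SimpleGraph.compl_adj, SimpleGraph.compl_adj]
  exact and_congr_left' Subtype.coe_injective.ne_iff

lemma tendsto_f (r : ℝ) (hr0 : 0 ≤ r) :
    Filter.Tendsto (fun n : ℕ => ((⌈(n : ℝ) * r⌉₊ : ℝ)) / n) Filter.atTop (nhds r) := by
  apply tendsto_of_tendsto_of_tendsto_of_le_of_le' (g := fun _ : ℕ => r)
      (h := fun n : ℕ => r + 1 / (n : ℝ))
  · exact tendsto_const_nhds
  · simpa using tendsto_const_nhds.add (tendsto_one_div_atTop_nhds_zero_nat (𝕜 := ℝ))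
  · filter_upwards [Filter.eventually_ge_atTop 1] with n hn
    have hn' : (0 : ℝ) < n := by exact_mod_cast hn
    rw [le_div_iff₀ hn']
    calc r * n = (n : ℝ) * r := by ring
    _ ≤ ⌈(n : ℝ) * r⌉₊ := Nat.le_ceil _
  · filter_upwards [Filter.eventually_ge_atTop 1] with n hn
    have hn' : (0 : ℝ) < n := by exact_mod_cast hn
    rw [div_le_iff₀ hn']
    have := (Nat.ceil_lt_add_one (by positivity : (0:ℝ) ≤ (n : ℝ) * r)).le
    calc (⌈(n : ℝ) * r⌉₊ : ℝ) ≤ (n : ℝ) * r + 1 := this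
    _ = (r + 1 / n) * n := by field_simp

lemma tendsto_h : Filter.Tendsto (fun n : ℕ => 1 / ((n : ℝ) - 1)) Filter.atTop (nhds 0) := by
  have h1 : Filter.Tendsto (fun n : ℕ => (n : ℝ) - 1) Filter.atTop Filter.atTop := by
    simpa [sub_eq_add_neg] using
      Filter.tendsto_atTop_add_const_right Filter.atTop (-1 : ℝ) tendsto_natCast_atTop_atTop
  simpa [one_div, Function.comp_def] using (tendsto_inv_atTop_zero).comp h1

lemma tendsto_choose_ratio (q : ℝ) (h0 : 0 ≤ q) :
    Filter.Tendsto
      (fun n : ℕ => ((Nat.ceil ((n : ℝ) * Real.sqrt q)).choose 2 : ℝ) / ((n.choose 2 : ℕ) : ℝ))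
      Filter.atTop (nhds q) := by
  set r := Real.sqrt q with hr
  have hr0 : 0 ≤ r := Real.sqrt_nonneg q
  set a : ℕ → ℕ := fun n => ⌈(n : ℝ) * r⌉₊ with ha
  have hf : Filter.Tendsto (fun n : ℕ => ((a n : ℝ)) / n) Filter.atTop (nhds r) :=
    tendsto_f r hr0
  -- g n := (a n - 1)/(n - 1) → r
  have hg : Filter.Tendsto (fun n : ℕ => ((a n : ℝ) - 1) / ((n : ℝ) - 1))
      Filter.atTop (nhds r) := by
    have hcomp : Filter.Tendsto
        (fun n : ℕ => ((a n : ℝ) / n) * (1 + 1 / ((n : ℝ) - 1)) - 1 / ((n : ℝ) - 1))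
        Filter.atTop (nhds (r * (1 + 0) - 0)) :=
      (hf.mul (tendsto_const_nhds.add tendsto_h)).sub tendsto_h
    rw [show r * (1 + 0) - 0 = r by ring] at hcomp
    apply Filter.Tendsto.congr' _ hcomp
    filter_upwards [Filter.eventually_ge_atTop 2] with n hn
    have h1 : (n : ℝ) ≠ 0 := by positivity
    have h2 : (n : ℝ) - 1 ≠ 0 := by
      have : (2 : ℝ) ≤ n := by exact_mod_cast hn
      intro hc; rw [sub_eq_zero] at hc; linarith
    field_simp
    ring
  have key : ∀ n : ℕ, ((a n).choose 2 : ℝ) / ((n.choose 2 : ℕ) : ℝ)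
      = ((a n : ℝ) / n) * (((a n : ℝ) - 1) / ((n : ℝ) - 1)) := by
    intro n
    rw [Nat.cast_choose_two, Nat.cast_choose_two, div_div_div_comm, div_mul_div_comm]
    norm_num
  have := hf.mul hg
  rw [← Real.mul_self_sqrt h0]
  apply Filter.Tendsto.congr _ this
  intro n
  rw [key n]


/-- If a k-vertex graph `F` is neither complete nor empty, then for every edge density
`p ∈ [0,1]` there is a sequence of graphs with vertex counts tending to infinity,
edge densities converging to `p`, and containing no induced copy of `F`. -/
theorem stmt14 {k : ℕ} (F : SimpleGraph (Fin k)) (h1 : F ≠ ⊤) (h2 : F ≠ ⊥)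
    (p : ℝ) (hp : p ∈ Set.Icc (0:ℝ) 1) :
    ∃ (m : ℕ → ℕ) (G : ∀ i, SimpleGraph (Fin (m i))),
      Filter.Tendsto m Filter.atTop Filter.atTop ∧
      Filter.Tendsto (fun i => subgraphFreq (⊤ : SimpleGraph (Fin 2)) (G i))
        Filter.atTop (nhds p) ∧
      (∀ i, subgraphFreq F (G i) = 0) := by
  obtain ⟨hp0, hp1⟩ := hp
  by_cases hNC : IsNC F
  · -- F is a near-clique: use complements of near-cliques
    set q : ℝ := 1 - p with hq
    have hq0 : (0:ℝ) ≤ q := by simp [hq]; linarith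
    have hq1 : q ≤ 1 := by simp [hq]; linarith
    set a : ℕ → ℕ := fun n => ⌈(n : ℝ) * Real.sqrt q⌉₊ with ha
    have hle : ∀ n, a n ≤ n := by
      intro n
      apply Nat.ceil_le.mpr
      exact mul_le_of_le_one_right (Nat.cast_nonneg n) (Real.sqrt_le_one.mpr hq1)
    refine ⟨fun n => n, fun n => (ncG n (a n))ᶜ, Filter.tendsto_id, ?_, ?_⟩
    · have hev : ∀ᶠ n in Filter.atTop,
          (1 : ℝ) - ((a n).choose 2 : ℝ) / ((n.choose 2 : ℕ) : ℝ)
            = subgraphFreq (⊤ : SimpleGraph (Fin 2)) ((ncG n (a n))ᶜ) := by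
        filter_upwards [Filter.eventually_ge_atTop 2] with n hn
        have hpos : (0:ℝ) < ((n.choose 2 : ℕ) : ℝ) := by
          exact_mod_cast Nat.choose_pos hn
        rw [freq2_ncG_compl n (a n) (hle n),
          Nat.cast_sub (Nat.choose_le_choose 2 (hle n)), sub_div, div_self hpos.ne']
      have hlim : Filter.Tendsto
          (fun n : ℕ => (1 : ℝ) - ((a n).choose 2 : ℝ) / ((n.choose 2 : ℕ) : ℝ))
          Filter.atTop (nhds (1 - q)) :=
        tendsto_const_nhds.sub (tendsto_choose_ratio q hq0)
      rw [show (1:ℝ) - q = p by simp [hq]] at hlim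
      exact Filter.Tendsto.congr' hev hlim
    · intro n
      apply freq_zero
      intro S
      rintro ⟨e⟩
      rw [induce_compl] at e
      have e2 := isoCompl e
      rw [compl_compl] at e2
      exact not_isNC_compl F h1 h2 hNC
        (isNC_of_iso e2.symm (isNC_induce (ncG_isNC n (a n)) _))
  · -- F is not a near-clique: use near-cliques
    set a : ℕ → ℕ := fun n => ⌈(n : ℝ) * Real.sqrt p⌉₊ with ha
    have hle : ∀ n, a n ≤ n := by
      intro n
      apply Nat.ceil_le.mpr
      exact mul_le_of_le_one_right (Nat.cast_nonneg n) (Real.sqrt_le_one.mpr hp1)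
    refine ⟨fun n => n, fun n => ncG n (a n), Filter.tendsto_id, ?_, ?_⟩
    · apply Filter.Tendsto.congr _ (tendsto_choose_ratio p hp0)
      intro n
      exact (freq2_ncG n (a n) (hle n)).symm
    · intro n
      apply freq_zero
      intro S
      rintro ⟨e⟩
      exact hNC (isNC_of_iso e.symm (isNC_induce (ncG_isNC n (a n)) _))
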